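/- arXiv:1006.1713 — 2 statements merged into one kernel-verified Lean document; each statement's English description precedes it below -/
import Mathlib

section
/- Let A be an n×n complex matrix with rows R_1,…,R_n, and for each i let R_{-i} = span{R_j : j ≠ i}. Then n^{−1/2} · min_{1≤i≤n} dist(R_i, R_{-i}) ≤ s_n(A) ≤ min_{1≤i≤n} dist(R_i, R_{-i}), where s_n(A) is the smallest singular value of A and dist denotes Euclidean distance. -/
open MeasureTheory

/-- The singular values of a rectangular complex matrix (unordered enumeration):
`s_i(A) = sqrt(λ_i(A Aᴴ))`. -/
noncomputable def svals {m n : ℕ} (A : Matrix (Fin m) (Fin n) ℂ) : Fin m → ℝ :=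
  fun i => Real.sqrt ((Matrix.isHermitian_mul_conjTranspose_self A).eigenvalues i)

/-- The `i`-th row of `A` as a vector of the Euclidean space `ℂⁿ`. -/
noncomputable def rowE {m n : ℕ} (A : Matrix (Fin m) (Fin n) ℂ) (i : Fin m) :
    EuclideanSpace ℂ (Fin n) := (WithLp.equiv 2 (Fin n → ℂ)).symm (A i)



open Matrix in
lemma RV.rayleigh_min {n : ℕ} (B : Matrix (Fin n) (Fin n) ℂ) (hB : B.IsHermitian)
    (x : EuclideanSpace ℂ (Fin n)) (m : ℝ) (hm : ∀ i, m ≤ hB.eigenvalues i) :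
    m * ‖x‖ ^ 2 ≤ Complex.re (star (WithLp.equiv 2 _ x) ⬝ᵥ (B *ᵥ WithLp.equiv 2 _ x)) := by
  classical
  set b := hB.eigenvectorBasis with hb
  set c : EuclideanSpace ℂ (Fin n) := b.repr x with hc
  have hsym := Matrix.isHermitian_iff_isSymmetric.1 hB
  set T := Matrix.toEuclideanLin B with hT
  have key : star (WithLp.equiv 2 _ x) ⬝ᵥ (B *ᵥ WithLp.equiv 2 _ x)
      = @inner ℂ _ _ x (T x) := by
    rw [hT, Matrix.toEuclideanLin_apply, dotProduct_comm]
    rfl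
  have hrepr : ∀ i, b.repr (T x) i = (hB.eigenvalues i : ℂ) * c i := by
    intro i
    rw [b.repr_apply_apply, ← hsym (b i) x]
    have h1 : T (b i) = (hB.eigenvalues i : ℝ) • (b i) := by
      apply (WithLp.equiv 2 _).injective
      have := hB.mulVec_eigenvectorBasis i
      rw [hT, Matrix.toEuclideanLin_apply]
      simpa using this
    have h2 : (hB.eigenvalues i : ℝ) • (b i) = ((hB.eigenvalues i : ℂ)) • (b i) :=
      RCLike.real_smul_eq_coe_smul _ _
    rw [h1, h2, inner_smul_left, ← b.repr_apply_apply x i]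
    simp [Complex.conj_ofReal, hc]
  have hinner : @inner ℂ _ _ x (T x)
      = ∑ i, (starRingEnd ℂ) (c i) * ((hB.eigenvalues i : ℂ) * c i) := by
    rw [← b.repr.inner_map_map x (T x), PiLp.inner_apply]
    simp only [RCLike.inner_apply, hrepr]
    rw [← hc]
    exact Finset.sum_congr rfl fun i _ => by ring
  have hnorm : ‖x‖ ^ 2 = ∑ i, Complex.normSq (c i) := by
    have h2 : ‖x‖ = ‖c‖ := (b.repr.norm_map x).symm
    rw [h2, EuclideanSpace.norm_eq, Real.sq_sqrt (by positivity)]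
    simp [Complex.normSq_eq_norm_sq]
  rw [key, hinner, hnorm, Complex.re_sum, Finset.mul_sum]
  apply Finset.sum_le_sum
  intro i _
  have h3 : ((starRingEnd ℂ) (c i) * ((hB.eigenvalues i : ℂ) * c i)).re
      = hB.eigenvalues i * Complex.normSq (c i) := by
    have : (starRingEnd ℂ) (c i) * ((hB.eigenvalues i : ℂ) * c i)
        = (hB.eigenvalues i : ℂ) * ((Complex.normSq (c i) : ℝ) : ℂ) := by
      rw [show (starRingEnd ℂ) (c i) * ((hB.eigenvalues i : ℂ) * c i)
          = (hB.eigenvalues i : ℂ) * (c i * (starRingEnd ℂ) (c i)) by ring, Complex.mul_conj]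
    rw [this, ← Complex.ofReal_mul, Complex.ofReal_re]
  rw [h3]
  exact mul_le_mul_of_nonneg_right (hm i) (Complex.normSq_nonneg _)

open Matrix in
lemma RV.quadform_eq_norm_sq {n : ℕ} (A : Matrix (Fin n) (Fin n) ℂ) (v : Fin n → ℂ) :
    Complex.re (star v ⬝ᵥ ((A * Aᴴ) *ᵥ v))
      = ‖(WithLp.equiv 2 (Fin n → ℂ)).symm (Aᴴ *ᵥ v)‖ ^ 2 := by
  have h1 : (A * Aᴴ) *ᵥ v = A *ᵥ (Aᴴ *ᵥ v) := (Matrix.mulVec_mulVec _ _ _).symm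
  have h2 : star v ⬝ᵥ (A *ᵥ (Aᴴ *ᵥ v)) = star (Aᴴ *ᵥ v) ⬝ᵥ (Aᴴ *ᵥ v) := by
    rw [Matrix.star_mulVec, Matrix.conjTranspose_conjTranspose,
      Matrix.dotProduct_mulVec]
  rw [h1, h2, dotProduct_comm]
  exact inner_self_eq_norm_sq (𝕜 := ℂ) ((WithLp.equiv 2 (Fin n → ℂ)).symm (Aᴴ *ᵥ v))

lemma RV.norm_symm_star {n : ℕ} (w : Fin n → ℂ) :
    ‖(WithLp.equiv 2 (Fin n → ℂ)).symm (star w)‖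
      = ‖(WithLp.equiv 2 (Fin n → ℂ)).symm w‖ := by
  rw [EuclideanSpace.norm_eq, EuclideanSpace.norm_eq]
  congr 1
  apply Finset.sum_congr rfl
  intro k _
  simp [norm_star]

lemma RV.norm_symm_sq {n : ℕ} (w : Fin n → ℂ) :
    ‖(WithLp.equiv 2 (Fin n → ℂ)).symm w‖ ^ 2 = ∑ k, ‖w k‖ ^ 2 := by
  rw [EuclideanSpace.norm_eq, Real.sq_sqrt (by positivity)]
  rfl

lemma RV.coord_le_norm {n : ℕ} (w : Fin n → ℂ) (i : Fin n) :
    ‖w i‖ ≤ ‖(WithLp.equiv 2 (Fin n → ℂ)).symm w‖ := by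
  rw [EuclideanSpace.norm_eq]
  rw [show ‖w i‖ = Real.sqrt (‖w i‖ ^ 2) from (Real.sqrt_sq (norm_nonneg _)).symm]
  apply Real.sqrt_le_sqrt
  exact Finset.single_le_sum (f := fun k => ‖w k‖ ^ 2) (fun k _ => by positivity)
    (Finset.mem_univ i)

lemma RV.sum_smul_rowE {n : ℕ} (A : Matrix (Fin n) (Fin n) ℂ) (c : Fin n → ℂ) :
    ∑ j, c j • rowE A j
      = (WithLp.equiv 2 (Fin n → ℂ)).symm (fun k => ∑ j, c j * A j k) := by
  have h : ∑ j, c j • rowE A j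
      = (WithLp.linearEquiv 2 ℂ (Fin n → ℂ)).symm (∑ j, c j • A j) := by
    rw [map_sum]
    apply Finset.sum_congr rfl
    intro j _
    rw [_root_.map_smul]
    rfl
  rw [h]
  show (WithLp.equiv 2 (Fin n → ℂ)).symm (∑ j, c j • A j) = _
  congr 1
  funext k
  simp [Finset.sum_apply]

open Matrix in
lemma RV.norm_sum_eq {n : ℕ} (A : Matrix (Fin n) (Fin n) ℂ) (c : Fin n → ℂ) :
    ‖∑ j, c j • rowE A j‖
      = ‖(WithLp.equiv 2 (Fin n → ℂ)).symm (Aᴴ *ᵥ star c)‖ := by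
  have h2 : Aᴴ *ᵥ (star c) = star (fun k => ∑ j, c j * A j k) := by
    funext k
    simp only [Matrix.mulVec, dotProduct, Matrix.conjTranspose_apply, Pi.star_apply,
      star_sum, star_mul']
    exact Finset.sum_congr rfl fun j _ => mul_comm _ _
  rw [RV.sum_smul_rowE, h2, RV.norm_symm_star]

open Matrix in
lemma RV.smin_mul_norm_le {n : ℕ} (hn : 0 < n) (A : Matrix (Fin n) (Fin n) ℂ) (v : Fin n → ℂ) :
    haveI : Nonempty (Fin n) := Fin.pos_iff_nonempty.mp hn
    (Finset.univ.inf' Finset.univ_nonempty (svals A)) * ‖(WithLp.equiv 2 (Fin n → ℂ)).symm v‖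
      ≤ ‖(WithLp.equiv 2 (Fin n → ℂ)).symm (Aᴴ *ᵥ v)‖ := by
  haveI : Nonempty (Fin n) := Fin.pos_iff_nonempty.mp hn
  set hB := Matrix.isHermitian_mul_conjTranspose_self A with hhB
  obtain ⟨i0, -, hi0⟩ := Finset.exists_mem_eq_inf' (Finset.univ_nonempty (α := Fin n)) hB.eigenvalues
  have hm0 : 0 ≤ hB.eigenvalues i0 := Matrix.eigenvalues_self_mul_conjTranspose_nonneg A i0
  have hmle : ∀ i, hB.eigenvalues i0 ≤ hB.eigenvalues i := fun i =>
    hi0 ▸ Finset.inf'_le _ (Finset.mem_univ i)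
  have hs : Finset.univ.inf' Finset.univ_nonempty (svals A) = Real.sqrt (hB.eigenvalues i0) := by
    apply le_antisymm
    · exact Finset.inf'_le _ (Finset.mem_univ i0)
    · exact Finset.le_inf' _ _ fun i _ => Real.sqrt_le_sqrt (hmle i)
  set x : EuclideanSpace ℂ (Fin n) := (WithLp.equiv 2 (Fin n → ℂ)).symm v with hx
  have hray := RV.rayleigh_min _ hB x (hB.eigenvalues i0) hmle
  have hv : WithLp.equiv 2 (Fin n → ℂ) x = v := rfl
  rw [hv, RV.quadform_eq_norm_sq A v] at hray
  have := Real.sqrt_le_sqrt hray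
  rw [Real.sqrt_mul hm0, Real.sqrt_sq (norm_nonneg _), Real.sqrt_sq (norm_nonneg _)] at this
  rwa [hs]

open Matrix in
lemma RV.smin_mul_norm_le_sum {n : ℕ} (hn : 0 < n) (A : Matrix (Fin n) (Fin n) ℂ)
    (c : Fin n → ℂ) :
    haveI : Nonempty (Fin n) := Fin.pos_iff_nonempty.mp hn
    (Finset.univ.inf' Finset.univ_nonempty (svals A)) * ‖(WithLp.equiv 2 (Fin n → ℂ)).symm c‖
      ≤ ‖∑ j, c j • rowE A j‖ := by
  haveI : Nonempty (Fin n) := Fin.pos_iff_nonempty.mp hn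
  rw [RV.norm_sum_eq, ← RV.norm_symm_star (w := c)]
  exact RV.smin_mul_norm_le hn A (star c)


open Matrix in
/-- Rudelson–Vershynin row bound: for an `n × n` complex matrix `A` with rows
`R_1, …, R_n`, one has
`n^{-1/2} min_i dist(R_i, span{R_j, j ≠ i}) ≤ s_n(A) ≤ min_i dist(R_i, span{R_j, j ≠ i})`. -/
theorem rudelson_vershynin_row_bound {n : ℕ} (hn : 0 < n)
    (A : Matrix (Fin n) (Fin n) ℂ) :
    haveI : Nonempty (Fin n) := Fin.pos_iff_nonempty.mp hn
    (n : ℝ) ^ (-(1/2 : ℝ)) *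
        (Finset.univ.inf' (Finset.univ_nonempty) fun i =>
          Metric.infDist (rowE A i)
            (Submodule.span ℂ (rowE A '' {j | j ≠ i}) : Set (EuclideanSpace ℂ (Fin n))))
      ≤ Finset.univ.inf' (Finset.univ_nonempty) (svals A) ∧
    Finset.univ.inf' (Finset.univ_nonempty) (svals A)
      ≤ Finset.univ.inf' (Finset.univ_nonempty) (fun i =>
          Metric.infDist (rowE A i)
            (Submodule.span ℂ (rowE A '' {j | j ≠ i}) : Set (EuclideanSpace ℂ (Fin n)))) := by
  haveI : Nonempty (Fin n) := Fin.pos_iff_nonempty.mp hn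
  classical
  set s := Finset.univ.inf' Finset.univ_nonempty (svals A) with hsdef
  set D : Fin n → ℝ := fun i => Metric.infDist (rowE A i)
      (Submodule.span ℂ (rowE A '' {j | j ≠ i}) : Set (EuclideanSpace ℂ (Fin n))) with hDdef
  have hs0 : 0 ≤ s := Finset.le_inf' _ _ fun i _ => Real.sqrt_nonneg _
  constructor
  · -- lower bound
    obtain ⟨i0, -, hi0⟩ :=
      Finset.exists_mem_eq_inf' (Finset.univ_nonempty (α := Fin n)) (svals A)
    set hB := Matrix.isHermitian_mul_conjTranspose_self A with hhB
    set v : EuclideanSpace ℂ (Fin n) := hB.eigenvectorBasis i0 with hvdef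
    have hv1 : ‖v‖ = 1 := hB.eigenvectorBasis.orthonormal.1 i0
    set c : Fin n → ℂ := star (WithLp.equiv 2 (Fin n → ℂ) v) with hcdef
    have hBv : (A * Aᴴ) *ᵥ (WithLp.equiv 2 (Fin n → ℂ) v)
        = hB.eigenvalues i0 • (WithLp.equiv 2 (Fin n → ℂ) v) := by
      simpa using hB.mulVec_eigenvectorBasis i0
    have hq : Complex.re (star (WithLp.equiv 2 (Fin n → ℂ) v) ⬝ᵥ
        ((A * Aᴴ) *ᵥ WithLp.equiv 2 (Fin n → ℂ) v)) = hB.eigenvalues i0 := by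
      rw [hBv, dotProduct_smul]
      have h1 : star (WithLp.equiv 2 (Fin n → ℂ) v) ⬝ᵥ (WithLp.equiv 2 (Fin n → ℂ) v)
          = (‖v‖ : ℂ) ^ 2 := by
        rw [dotProduct_comm]
        exact inner_self_eq_norm_sq_to_K v
      rw [h1, hv1]
      simp
    have hnormw : ‖(WithLp.equiv 2 (Fin n → ℂ)).symm
        (Aᴴ *ᵥ WithLp.equiv 2 (Fin n → ℂ) v)‖ = s := by
      have h2 := RV.quadform_eq_norm_sq A (WithLp.equiv 2 (Fin n → ℂ) v)
      rw [hq] at h2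
      have h3 : ‖(WithLp.equiv 2 (Fin n → ℂ)).symm (Aᴴ *ᵥ WithLp.equiv 2 (Fin n → ℂ) v)‖
          = Real.sqrt (hB.eigenvalues i0) := by
        rw [h2, Real.sqrt_sq (norm_nonneg _)]
      rw [h3, hsdef, hi0]
      rfl
    have hnorm_sum : ‖∑ j, c j • rowE A j‖ = s := by
      rw [RV.norm_sum_eq, hcdef, star_star, hnormw]
    have hc_norm : ‖(WithLp.equiv 2 (Fin n → ℂ)).symm c‖ = 1 := by
      rw [hcdef, RV.norm_symm_star]
      exact hv1
    obtain ⟨i1, -, hi1⟩ :=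
      Finset.exists_mem_eq_sup' (Finset.univ_nonempty (α := Fin n)) (fun j => ‖c j‖)
    have hmax : ∀ j, ‖c j‖ ≤ ‖c i1‖ := fun j =>
      hi1 ▸ Finset.le_sup' (fun j => ‖c j‖) (Finset.mem_univ j)
    have h1n : 1 ≤ (n : ℝ) * ‖c i1‖ ^ 2 := by
      have e1 : (1 : ℝ) = ∑ k, ‖c k‖ ^ 2 := by
        rw [← RV.norm_symm_sq, hc_norm, one_pow]
      rw [e1]
      calc ∑ k, ‖c k‖ ^ 2 ≤ ∑ _k : Fin n, ‖c i1‖ ^ 2 :=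
            Finset.sum_le_sum fun k _ => pow_le_pow_left₀ (norm_nonneg _) (hmax k) 2
        _ = (n : ℝ) * ‖c i1‖ ^ 2 := by simp [mul_comm]
    have hnR : (0:ℝ) ≤ n := Nat.cast_nonneg n
    have hx2 : 0 < ‖c i1‖ ^ 2 := by
      by_contra h
      push_neg at h
      nlinarith
    have hci1 : 0 < ‖c i1‖ :=
      lt_of_le_of_ne (norm_nonneg _) (fun h => by rw [← h] at hx2; simp at hx2)
    have hci1ne : c i1 ≠ 0 := by
      rw [← norm_pos_iff]
      exact hci1
    have h4 : 1 ≤ Real.sqrt n * ‖c i1‖ := by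
      have h40 := Real.sqrt_le_sqrt h1n
      rwa [Real.sqrt_one, Real.sqrt_mul hnR, Real.sqrt_sq (norm_nonneg _)] at h40
    have h5 : ‖c i1‖⁻¹ ≤ Real.sqrt n := (inv_le_iff_one_le_mul₀ hci1).2 h4
    -- y in span
    set y : EuclideanSpace ℂ (Fin n) :=
      -∑ j ∈ Finset.univ.erase i1, ((c i1)⁻¹ * c j) • rowE A j with hydef
    have hyS : y ∈ (Submodule.span ℂ (rowE A '' {j | j ≠ i1}) :
        Set (EuclideanSpace ℂ (Fin n))) := by
      apply Submodule.neg_mem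
      apply Submodule.sum_mem
      intro j hj
      exact Submodule.smul_mem _ _ (Submodule.subset_span
        (Set.mem_image_of_mem _ ((Finset.mem_erase.1 hj).1)))
    have hdiff : rowE A i1 - y = (c i1)⁻¹ • ∑ j, c j • rowE A j := by
      rw [hydef, sub_neg_eq_add, Finset.smul_sum]
      simp_rw [smul_smul]
      rw [← Finset.add_sum_erase _ _ (Finset.mem_univ i1), inv_mul_cancel₀ hci1ne, one_smul]
    have hDi1 : D i1 ≤ ‖c i1‖⁻¹ * s := by
      calc D i1 ≤ dist (rowE A i1) y := Metric.infDist_le_dist_of_mem hyS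
        _ = ‖rowE A i1 - y‖ := dist_eq_norm _ _
        _ = ‖c i1‖⁻¹ * s := by
            rw [hdiff, norm_smul, norm_inv, hnorm_sum]
    have hDm : Finset.univ.inf' Finset.univ_nonempty D ≤ Real.sqrt n * s := by
      calc Finset.univ.inf' Finset.univ_nonempty D ≤ D i1 :=
            Finset.inf'_le _ (Finset.mem_univ i1)
        _ ≤ ‖c i1‖⁻¹ * s := hDi1
        _ ≤ Real.sqrt n * s := mul_le_mul_of_nonneg_right h5 hs0
    have hrpow : (n : ℝ) ^ (-(1/2 : ℝ)) = (Real.sqrt n)⁻¹ := by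
      rw [Real.rpow_neg hnR, Real.sqrt_eq_rpow]
    have hsqrt_pos : 0 < Real.sqrt n := Real.sqrt_pos.2 (by exact_mod_cast hn)
    calc (n : ℝ) ^ (-(1/2 : ℝ)) * Finset.univ.inf' Finset.univ_nonempty D
        ≤ (n : ℝ) ^ (-(1/2 : ℝ)) * (Real.sqrt n * s) := by
          apply mul_le_mul_of_nonneg_left hDm (Real.rpow_nonneg hnR _)
      _ = s := by
          rw [hrpow, ← mul_assoc, inv_mul_cancel₀ (ne_of_gt hsqrt_pos), one_mul]
  · -- upper bound
    apply Finset.le_inf'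
    intro i _
    apply le_of_forall_pos_le_add
    intro ε hε
    have hSne : (Submodule.span ℂ (rowE A '' {j | j ≠ i}) :
        Set (EuclideanSpace ℂ (Fin n))).Nonempty := ⟨0, Submodule.zero_mem _⟩
    have hlt : Metric.infDist (rowE A i)
        (Submodule.span ℂ (rowE A '' {j | j ≠ i}) : Set (EuclideanSpace ℂ (Fin n)))
        < D i + ε := lt_add_of_pos_right _ hε
    obtain ⟨y, hyS, hy⟩ := (Metric.infDist_lt_iff hSne).1 hlt
    rw [Set.image_eq_range] at hyS
    obtain ⟨d, hd⟩ := (Submodule.mem_span_range_iff_exists_fun ℂ).1 hyS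
    set c : Fin n → ℂ := fun j => if h : j = i then 1 else -(d ⟨j, h⟩) with hcdef
    have hci : c i = 1 := by simp [hcdef]
    have hsum : ∑ j, c j • rowE A j = rowE A i - y := by
      rw [← Finset.add_sum_erase _ _ (Finset.mem_univ i), hci, one_smul]
      have herase : ∑ j ∈ Finset.univ.erase i, c j • rowE A j = -y := by
        rw [← hd]
        rw [Finset.sum_subtype (p := fun j => j ∈ {j : Fin n | j ≠ i}) (Finset.univ.erase i)
          (fun x => by simp [Finset.mem_erase, Set.mem_setOf_eq]) (fun j => c j • rowE A j)]
        rw [← Finset.sum_neg_distrib]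
        apply Finset.sum_congr rfl
        intro j _
        rw [← neg_smul]
        congr 1
        exact dif_neg j.prop
      rw [herase, sub_eq_add_neg]
    have hc1 : 1 ≤ ‖(WithLp.equiv 2 (Fin n → ℂ)).symm c‖ := by
      have := RV.coord_le_norm c i
      rwa [hci, norm_one] at this
    calc s = s * 1 := (mul_one s).symm
      _ ≤ s * ‖(WithLp.equiv 2 (Fin n → ℂ)).symm c‖ := mul_le_mul_of_nonneg_left hc1 hs0
      _ ≤ ‖∑ j, c j • rowE A j‖ := RV.smin_mul_norm_le_sum hn A c
      _ = ‖rowE A i - y‖ := by rw [hsum]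
      _ = dist (rowE A i) y := (dist_eq_norm _ _).symm
      _ ≤ D i + ε := le_of_lt hy
end

section
/- Let A be a full-rank n′×n complex matrix with n′ ≤ n, with rows R_1,…,R_{n′}, and let R_{-i} = span{R_j : j ≠ i}. Then ∑_{i=1}^{n′} s_i(A)^{−2} = ∑_{i=1}^{n′} dist(R_i, R_{-i})^{−2}. -/
open Matrix in
open scoped InnerProductSpace in
/-- Distance from a row to the span of the other rows, in terms of the inverse Gram
matrix: `dist(R_i, R_{-i})^{-2} = ((A Aᴴ)⁻¹)_{ii}` (real part). -/
lemma tao_vu_dist_row_sq {n' n : ℕ} (A : Matrix (Fin n') (Fin n) ℂ)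
    (hdet : IsUnit (A * Aᴴ).det) (i : Fin n') :
    (Metric.infDist (rowE A i)
        (Submodule.span ℂ (rowE A '' {j | j ≠ i}) : Set (EuclideanSpace ℂ (Fin n))))
      ^ (-2 : ℤ) = ((A * Aᴴ)⁻¹ i i).re := by
  classical
  set B := A * Aᴴ with hBdef
  set V : Submodule ℂ (EuclideanSpace ℂ (Fin n)) :=
    Submodule.span ℂ (rowE A '' {j | j ≠ i}) with hV
  set c : ℂ := B⁻¹ i i with hc
  set w : EuclideanSpace ℂ (Fin n) := ∑ j, B⁻¹ i j • rowE A j with hwdef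
  have hinner : ∀ k j, ⟪rowE A k, rowE A j⟫_ℂ = B j k := by
    intro k j
    simp [rowE, PiLp.inner_apply, RCLike.inner_apply, hBdef, Matrix.mul_apply,
      Matrix.conjTranspose_apply, mul_comm]
  have hwk : ∀ k, ⟪rowE A k, w⟫_ℂ = if i = k then 1 else 0 := by
    intro k
    rw [hwdef, inner_sum]
    simp_rw [inner_smul_right, hinner]
    rw [show ∑ j, B⁻¹ i j * B j k = (B⁻¹ * B) i k from (Matrix.mul_apply).symm,
      Matrix.nonsing_inv_mul B hdet, Matrix.one_apply]
  have hww : ⟪w, w⟫_ℂ = star c := by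
    nth_rewrite 1 [hwdef]
    rw [sum_inner]
    simp_rw [inner_smul_left, hwk]
    simp [hc]
  have hcre : c = ((‖w‖ ^ 2 : ℝ) : ℂ) := by
    have h1 : ⟪w, w⟫_ℂ = ((‖w‖ : ℂ)) ^ 2 := inner_self_eq_norm_sq_to_K w
    have h2 : star c = c := by
      have hH : (B⁻¹).IsHermitian := (Matrix.isHermitian_mul_conjTranspose_self A).inv
      exact hH.apply i i
    rw [h2] at hww
    rw [← hww, h1]
    push_cast
    ring
  have hw0 : w ≠ 0 := by
    intro h
    have := hwk i
    rw [h, inner_zero_right, if_pos rfl] at this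
    exact one_ne_zero this.symm
  have hnw : (0:ℝ) < ‖w‖ := norm_pos_iff.mpr hw0
  have hc0 : c ≠ 0 := by
    rw [hcre]
    exact_mod_cast (by positivity : (‖w‖ ^ 2 : ℝ) ≠ 0)
  set u : EuclideanSpace ℂ (Fin n) := c⁻¹ • w with hu
  have huV : u ∈ Vᗮ := by
    rw [Submodule.mem_orthogonal]
    intro x hx
    induction hx using Submodule.span_induction with
    | mem x hx =>
        obtain ⟨j, hj, rfl⟩ := hx
        rw [hu, inner_smul_right, hwk j, if_neg (Ne.symm hj), mul_zero]
    | zero => exact inner_zero_left _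
    | add x y _ _ hx hy => rw [inner_add_left, hx, hy, add_zero]
    | smul a x _ hx => rw [inner_smul_left, hx, mul_zero]
  have hmem : rowE A i - u ∈ V := by
    have hsum : w = c • rowE A i + ∑ j ∈ Finset.univ.erase i, B⁻¹ i j • rowE A j := by
      rw [hwdef, ← Finset.add_sum_erase _ _ (Finset.mem_univ i)]
    have hs : (∑ j ∈ Finset.univ.erase i, B⁻¹ i j • rowE A j) ∈ V :=
      Submodule.sum_mem _ fun j hj => Submodule.smul_mem _ _
        (Submodule.subset_span ⟨j, Finset.ne_of_mem_erase hj, rfl⟩)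
    have heq : rowE A i - u
        = -(c⁻¹ • ∑ j ∈ Finset.univ.erase i, B⁻¹ i j • rowE A j) := by
      rw [hu, hsum, smul_add, smul_smul, inv_mul_cancel₀ hc0, one_smul]
      abel
    rw [heq]
    exact Submodule.neg_mem _ (Submodule.smul_mem _ _ hs)
  have hproj : (V.starProjection (rowE A i) : EuclideanSpace ℂ (Fin n))
      = rowE A i - u :=
    Submodule.eq_starProjection_of_mem_orthogonal hmem (by simpa using huV)
  have hdist : Metric.infDist (rowE A i) (V : Set (EuclideanSpace ℂ (Fin n))) = ‖u‖ := by
    rw [Metric.infDist_eq_iInf]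
    have hmin := Submodule.starProjection_minimal (U := V) (rowE A i)
    rw [hproj, sub_sub_cancel] at hmin
    simp only [dist_eq_norm]
    exact hmin.symm
  have hun : ‖u‖ = ‖w‖⁻¹ := by
    rw [hu, norm_smul, norm_inv, hcre]
    rw [Complex.norm_real, Real.norm_eq_abs, abs_of_nonneg (by positivity)]
    field_simp
  have hzp : (‖w‖⁻¹) ^ (-2 : ℤ) = ‖w‖ ^ (2 : ℕ) := by
    rw [_root_.inv_zpow, ← _root_.zpow_neg, neg_neg, zpow_ofNat]
  rw [hdist, hun, hzp, hcre, Complex.ofReal_re]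

open Matrix in
open scoped ComplexOrder in
/-- The eigenvalues of `A Aᴴ` are positive when `A` has full row rank. -/
lemma tao_vu_eigenvalues_pos {n' n : ℕ} (A : Matrix (Fin n') (Fin n) ℂ)
    (hrank : A.rank = n') (i : Fin n') :
    0 < (Matrix.isHermitian_mul_conjTranspose_self A).eigenvalues i := by
  set B := A * Aᴴ with hBdef
  have hB : B.IsHermitian := Matrix.isHermitian_mul_conjTranspose_self A
  have hBrank : B.rank = n' := by rw [hBdef, Matrix.rank_self_mul_conjTranspose, hrank]
  rcases (Matrix.eigenvalues_self_mul_conjTranspose_nonneg A i).lt_or_eq with h | h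
  · exact h
  · exfalso
    have hcard := hB.rank_eq_card_non_zero_eigs
    rw [hBrank] at hcard
    have hlt : Fintype.card {j // hB.eigenvalues j ≠ 0} < Fintype.card (Fin n') :=
      Fintype.card_subtype_lt (x := i) (by simp [← h])
    rw [Fintype.card_fin] at hlt
    omega

open Matrix in
/-- The trace of the inverse of a Hermitian matrix with positive eigenvalues is the sum
of the inverses of its eigenvalues. -/
lemma tao_vu_trace_inv {n' : ℕ} (B : Matrix (Fin n') (Fin n') ℂ) (hB : B.IsHermitian)
    (hpos : ∀ i, 0 < hB.eigenvalues i) :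
    B⁻¹.trace = ∑ i, ((hB.eigenvalues i : ℂ))⁻¹ := by
  set U : Matrix (Fin n') (Fin n') ℂ :=
    (hB.eigenvectorUnitary : Matrix (Fin n') (Fin n') ℂ) with hU
  set D' : Matrix (Fin n') (Fin n') ℂ :=
    diagonal (fun i => ((hB.eigenvalues i : ℂ))⁻¹) with hD'
  have hUU : star U * U = 1 := (Matrix.mem_unitaryGroup_iff').mp hB.eigenvectorUnitary.2
  have hUU' : U * star U = 1 := (Matrix.mem_unitaryGroup_iff).mp hB.eigenvectorUnitary.2
  have hinv : B⁻¹ = U * D' * star U := by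
    apply Matrix.inv_eq_left_inv
    nth_rewrite 1 [hB.spectral_theorem, Unitary.conjStarAlgAut_apply]
    have key : (U * D' * star U) * (U * diagonal (RCLike.ofReal ∘ hB.eigenvalues) * star U)
        = U * (D' * (star U * U) * diagonal (RCLike.ofReal ∘ hB.eigenvalues)) * star U := by
      simp only [Matrix.mul_assoc]
    rw [key, hUU, Matrix.mul_one, hD', diagonal_mul_diagonal]
    have : (fun i => ((hB.eigenvalues i : ℂ))⁻¹ * (RCLike.ofReal ∘ hB.eigenvalues) i)
        = fun _ => 1 := by
      funext i
      simp only [Function.comp]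
      exact inv_mul_cancel₀ (by simpa using (hpos i).ne')
    rw [this, diagonal_one, Matrix.mul_one, hUU']
  rw [hinv, Matrix.trace_mul_cycle, hUU, Matrix.one_mul, hD', Matrix.trace_diagonal]

/-- Tao–Vu negative second moment identity: if `A` is a full rank `n′ × n` complex
matrix (`n′ ≤ n`) with rows `R_1, …, R_{n′}`, then
`∑_i s_i(A)^{-2} = ∑_i dist(R_i, span{R_j, j ≠ i})^{-2}`. -/
theorem tao_vu_negative_second_moment {n' n : ℕ} (hn : n' ≤ n)
    (A : Matrix (Fin n') (Fin n) ℂ) (hrank : A.rank = n') :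
    ∑ i : Fin n', (svals A i) ^ (-2 : ℤ)
      = ∑ i : Fin n',
          (Metric.infDist (rowE A i)
            (Submodule.span ℂ (rowE A '' {j | j ≠ i}) : Set (EuclideanSpace ℂ (Fin n))))
          ^ (-2 : ℤ) := by
  classical
  set B := A * A.conjTranspose with hBdef
  have hB : B.IsHermitian := Matrix.isHermitian_mul_conjTranspose_self A
  have hpos : ∀ i, 0 < hB.eigenvalues i := tao_vu_eigenvalues_pos A hrank
  have hdet : IsUnit B.det := by
    rw [hB.det_eq_prod_eigenvalues, isUnit_iff_ne_zero]
    exact Finset.prod_ne_zero_iff.mpr fun i _ => by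
      simpa using (hpos i).ne'
  have htrace : B⁻¹.trace = ∑ i, ((hB.eigenvalues i : ℂ))⁻¹ := tao_vu_trace_inv B hB hpos
  have hLHS : ∑ i : Fin n', (svals A i) ^ (-2 : ℤ) = (B⁻¹.trace).re := by
    have hterm : ∀ i : Fin n', (svals A i) ^ (-2 : ℤ) = (hB.eigenvalues i)⁻¹ := by
      intro i
      have hsv : svals A i = Real.sqrt (hB.eigenvalues i) := rfl
      rw [hsv, _root_.zpow_neg, zpow_ofNat, Real.sq_sqrt (hpos i).le]
    rw [htrace, Complex.re_sum]
    refine Finset.sum_congr rfl fun i _ => ?_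
    rw [hterm i, ← Complex.ofReal_inv, Complex.ofReal_re]
  have hRHS : ∑ i : Fin n',
      (Metric.infDist (rowE A i)
        (Submodule.span ℂ (rowE A '' {j | j ≠ i}) : Set (EuclideanSpace ℂ (Fin n))))
      ^ (-2 : ℤ) = (B⁻¹.trace).re := by
    rw [Matrix.trace, Complex.re_sum]
    exact Finset.sum_congr rfl fun i _ => tao_vu_dist_row_sq A hdet i
  rw [hLHS, hRHS]
end
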